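/- arXiv:1803.10266 — 2 statements merged into one kernel-verified Lean document; each statement's English description precedes it below -/
import Mathlib

section
/- Let y : [ℓ] → {0,1} be an alternating sequence (y_{j+1} ≠ y_j for all j < ℓ) and let f : [ℓ] → {0,1} be any function that is constant on each of k+1 consecutive blocks partitioning [ℓ]. Then Σ_{j∈[ℓ]} |f(j) − y(j)| ≥ (ℓ − k − 1)/2. -/
theorem stmt_11 (l k : ℕ) (y f : Fin l → ℝ)
    (hy01 : ∀ j, y j = 0 ∨ y j = 1) (hf01 : ∀ j, f j = 0 ∨ f j = 1)
    (halt : ∀ j : ℕ, ∀ h : j + 1 < l, y ⟨j + 1, h⟩ ≠ y ⟨j, Nat.lt_of_succ_lt h⟩)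
    (b : Fin l → Fin (k + 1)) (hb : Monotone b)
    (hconst : ∀ j j', b j = b j' → f j = f j') :
    ((l : ℝ) - k - 1) / 2 ≤ ∑ j, |f j - y j| := by
  classical
  have hSnn : 0 ≤ ∑ j, |f j - y j| := Finset.sum_nonneg fun j _ => abs_nonneg _
  rcases le_or_gt ((l : ℝ) - k - 1) 0 with hl | hl
  · linarith
  have hlk : k + 2 ≤ l := by
    have : (k : ℝ) + 1 < l := by linarith
    exact_mod_cast this
  have hl1 : 1 ≤ l := by omega
  set c : ℕ → ℝ := fun j => if h : j < l then |f ⟨j, h⟩ - y ⟨j, h⟩| else 0 with hc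
  have hcnn : ∀ j, 0 ≤ c j := by
    intro j; simp only [hc]; split
    · exact abs_nonneg _
    · exact le_refl 0
  have hS : ∑ j, |f j - y j| = ∑ j ∈ Finset.range l, c j := by
    rw [Finset.sum_range]
    exact Finset.sum_congr rfl fun j _ => by simp [hc, j.isLt]
  set S := ∑ j ∈ Finset.range l, c j with hSdef
  set g : ℕ → ℕ := fun j => if h : j < l then (b ⟨j, h⟩).val else 0 with hg
  have hgle : ∀ i j, i ≤ j → j < l → g i ≤ g j := by
    intro i j hij hjl
    have hil : i < l := lt_of_le_of_lt hij hjl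
    simp only [hg, dif_pos hil, dif_pos hjl]
    exact hb (Fin.mk_le_mk.mpr hij)
  have hgk : ∀ j, g j ≤ k := by
    intro j
    simp only [hg]
    split
    · exact Nat.lt_succ_iff.mp (Fin.is_lt _)
    · exact Nat.zero_le _
  set T := (Finset.range (l - 1)).filter (fun j => g (j + 1) = g j) with hT
  set J := (Finset.range (l - 1)).filter (fun j => g (j + 1) ≠ g j) with hJ
  -- jumps are strictly increasing in g
  have hjump : ∀ j ∈ J, g j < g (j + 1) := by
    intro j hj
    simp only [hJ, Finset.mem_filter, Finset.mem_range] at hj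
    exact lt_of_le_of_ne (hgle j (j + 1) (Nat.le_succ j) (by omega)) (Ne.symm hj.2)
  have hJcard : J.card ≤ k := by
    have : J.card ≤ (Finset.Icc 1 k).card := by
      apply Finset.card_le_card_of_injOn (fun j => g (j + 1))
      · intro j hj
        have h1 : 1 ≤ g (j + 1) := by
          have := hjump j hj
          omega
        exact Finset.mem_Icc.mpr ⟨h1, hgk _⟩
      · intro i hi j hj hij
        by_contra hne
        have hij' : g (i + 1) = g (j + 1) := hij
        have hi2 : i < l - 1 := Finset.mem_range.mp (Finset.mem_filter.mp hi).1
        have hj2 : j < l - 1 := Finset.mem_range.mp (Finset.mem_filter.mp hj).1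
        rcases Nat.lt_or_ge i j with h | h
        · have : g (i + 1) ≤ g j := hgle _ _ (by omega) (by omega)
          have := hjump j hj
          omega
        · have h' : j < i := by omega
          have : g (j + 1) ≤ g i := hgle _ _ (by omega) (by omega)
          have := hjump i hi
          omega
    simpa using this
  have hTJ : T.card + J.card = l - 1 := by
    rw [hT, hJ]
    rw [Finset.card_filter_add_card_filter_not]
    · simp
  have hTcard : l - 1 - k ≤ T.card := by omega
  -- key pointwise bound
  have hone : ∀ j ∈ T, (1 : ℝ) ≤ c j + c (j + 1) := by
    intro j hj
    simp only [hT, Finset.mem_filter, Finset.mem_range] at hj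
    have hj1 : j + 1 < l := by omega
    have hjl : j < l := by omega
    have hbeq : b ⟨j, hjl⟩ = b ⟨j + 1, hj1⟩ := by
      have := hj.2
      simp only [hg, dif_pos hj1, dif_pos hjl] at this
      exact Fin.ext this.symm
    have hfeq : f ⟨j, hjl⟩ = f ⟨j + 1, hj1⟩ := hconst _ _ hbeq
    have hyne : y ⟨j + 1, hj1⟩ ≠ y ⟨j, hjl⟩ := halt j hj1
    have hcj : c j = |f ⟨j, hjl⟩ - y ⟨j, hjl⟩| := by simp [hc, hjl]
    have hcj1 : c (j + 1) = |f ⟨j + 1, hj1⟩ - y ⟨j + 1, hj1⟩| := by simp [hc, hj1]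
    rw [hcj, hcj1, ← hfeq]
    rcases hf01 ⟨j, hjl⟩ with hf | hf <;>
      rcases hy01 ⟨j, hjl⟩ with h0 | h0 <;>
      rcases hy01 ⟨j + 1, hj1⟩ with h1 | h1 <;>
      rw [hf, h0, h1] <;>
      first
        | (exfalso; rw [h0, h1] at hyne; exact hyne rfl)
        | norm_num
  -- sum over T
  have hsumT : (T.card : ℝ) ≤ ∑ j ∈ T, (c j + c (j + 1)) := by
    calc (T.card : ℝ) = ∑ _j ∈ T, (1 : ℝ) := by simp
    _ ≤ ∑ j ∈ T, (c j + c (j + 1)) := Finset.sum_le_sum hone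
  have hsub1 : ∑ j ∈ T, c j ≤ S := by
    apply Finset.sum_le_sum_of_subset_of_nonneg
    · intro j hj
      simp only [hT, Finset.mem_filter, Finset.mem_range] at hj
      exact Finset.mem_range.mpr (by omega)
    · intro j _ _; exact hcnn j
  have hsub2 : ∑ j ∈ T, c (j + 1) ≤ S := by
    have himg : ∑ j ∈ T, c (j + 1) = ∑ j ∈ T.image (· + 1), c j := by
      rw [Finset.sum_image]
      intro i _ j _ h
      simp only at h
      omega
    rw [himg]
    apply Finset.sum_le_sum_of_subset_of_nonneg
    · intro j hj
      simp only [Finset.mem_image, hT, Finset.mem_filter, Finset.mem_range] at hj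
      obtain ⟨i, ⟨hi, _⟩, rfl⟩ := hj
      exact Finset.mem_range.mpr (by omega)
    · intro j _ _; exact hcnn j
  have h2S : (T.card : ℝ) ≤ 2 * S := by
    rw [Finset.sum_add_distrib] at hsumT
    linarith
  have hcast : ((l : ℝ) - 1 - k) ≤ (T.card : ℝ) := by
    have : ((l - 1 - k : ℕ) : ℝ) ≤ (T.card : ℝ) := by exact_mod_cast hTcard
    have heq : ((l - 1 - k : ℕ) : ℝ) = (l : ℝ) - 1 - k := by
      have : k + 1 ≤ l := by omega
      push_cast [Nat.sub_sub, Nat.cast_sub (by omega : 1 + k ≤ l)]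
      ring
    linarith [heq ▸ this]
  rw [hS]
  linarith
end

section
/- Let M : Z^n × Z → [0,B] be such that for every z∈Z and datasets S, S' differing in one element, the max-divergence D_∞(M(S,z)‖M(S',z)) ≤ ε (i.e., M is an ε-differentially private evaluation algorithm with δ=0). Let P be any distribution over Z and k ≥ 1 an integer. Then E_{S,S'∼P^n}[ ( (1/n)·Σ_i E_M[M(S,z'_i)] )^k ] ≤ e^{k²ε} · E_{S∼P^n}[ ( (1/n)·Σ_i E_M[M(S,z_i)] )^k ]. -/
open MeasureTheory

/-- Two datasets are neighbors if they differ in at most one element. -/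
def Neighbors {Z : Type*} {n : ℕ} (S S' : Fin n → Z) : Prop :=
  ∃ j, ∀ i, i ≠ j → S i = S' i


lemma aux_ae_mem {B : ℝ} (μ : Measure ℝ) (h : μ (Set.Icc (0:ℝ) B)ᶜ = 0) :
    ∀ᵐ w ∂μ, w ∈ Set.Icc (0:ℝ) B := by
  exact mem_ae_iff.mpr h

lemma aux_int_id {B : ℝ} (μ : Measure ℝ) [IsProbabilityMeasure μ]
    (h : μ (Set.Icc (0:ℝ) B)ᶜ = 0) : Integrable (fun w : ℝ => w) μ := by
  refine Integrable.mono' (integrable_const B) measurable_id.aestronglyMeasurable ?_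
  filter_upwards [aux_ae_mem μ h] with w hw
  rw [Real.norm_eq_abs, abs_of_nonneg hw.1]; exact hw.2

lemma aux_nonneg {B : ℝ} (μ : Measure ℝ) (h : μ (Set.Icc (0:ℝ) B)ᶜ = 0) :
    0 ≤ ∫ w, w ∂μ :=
  integral_nonneg_of_ae ((aux_ae_mem μ h).mono fun _ hw => hw.1)

lemma aux_le_B {B : ℝ} (μ : Measure ℝ) [IsProbabilityMeasure μ]
    (h : μ (Set.Icc (0:ℝ) B)ᶜ = 0) : ∫ w, w ∂μ ≤ B := by
  have := integral_mono_ae (aux_int_id μ h) (integrable_const B)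
    ((aux_ae_mem μ h).mono fun _ hw => hw.2)
  simpa using this

lemma aux_cmp {B c : ℝ} (hc : 0 ≤ c) (μ ν : Measure ℝ)
    [IsProbabilityMeasure μ] [IsProbabilityMeasure ν]
    (hμ : μ (Set.Icc (0:ℝ) B)ᶜ = 0) (hν : ν (Set.Icc (0:ℝ) B)ᶜ = 0)
    (h : ∀ O : Set ℝ, MeasurableSet O → μ O ≤ ENNReal.ofReal c * ν O) :
    ∫ w, w ∂μ ≤ c * ∫ w, w ∂ν := by
  rw [integral_eq_lintegral_of_nonneg_ae ((aux_ae_mem μ hμ).mono fun _ hw => hw.1)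
      measurable_id.aestronglyMeasurable,
    integral_eq_lintegral_of_nonneg_ae ((aux_ae_mem ν hν).mono fun _ hw => hw.1)
      measurable_id.aestronglyMeasurable]
  have hle : μ ≤ (ENNReal.ofReal c) • ν := by
    rw [Measure.le_iff]; intro s hs; simpa using h s hs
  have h1 : ∫⁻ w, ENNReal.ofReal w ∂μ ≤ ENNReal.ofReal c * ∫⁻ w, ENNReal.ofReal w ∂ν := by
    calc ∫⁻ w, ENNReal.ofReal w ∂μ ≤ ∫⁻ w, ENNReal.ofReal w ∂((ENNReal.ofReal c) • ν) :=
          lintegral_mono' hle le_rfl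
      _ = ENNReal.ofReal c * ∫⁻ w, ENNReal.ofReal w ∂ν := lintegral_smul_measure _ _
  have hfin : ∫⁻ w, ENNReal.ofReal w ∂ν ≠ ⊤ := by
    refine ne_top_of_le_ne_top (b := ENNReal.ofReal B) ENNReal.ofReal_ne_top ?_
    calc ∫⁻ w, ENNReal.ofReal w ∂ν ≤ ∫⁻ _, ENNReal.ofReal B ∂ν :=
          lintegral_mono_ae ((aux_ae_mem ν hν).mono fun _ hw => ENNReal.ofReal_le_ofReal hw.2)
      _ = ENNReal.ofReal B := by simp
  calc (∫⁻ w, ENNReal.ofReal w ∂μ).toReal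
      ≤ (ENNReal.ofReal c * ∫⁻ w, ENNReal.ofReal w ∂ν).toReal :=
        ENNReal.toReal_mono (ENNReal.mul_ne_top ENNReal.ofReal_ne_top hfin) h1
    _ = c * (∫⁻ w, ENNReal.ofReal w ∂ν).toReal := by
        rw [ENNReal.toReal_mul, ENNReal.toReal_ofReal hc]



lemma aux_grp {Z : Type*} [MeasurableSpace Z] {n : ℕ} {ε : ℝ}
    (M : (Fin n → Z) → Z → Measure ℝ)
    (hdp : ∀ S S' : Fin n → Z, Neighbors S S' → ∀ z, ∀ O : Set ℝ, MeasurableSet O →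
      M S z O ≤ ENNReal.ofReal (Real.exp ε) * M S' z O)
    (T : Finset (Fin n)) :
    ∀ S S' : Fin n → Z, (∀ i, i ∉ T → S i = S' i) → ∀ z (O : Set ℝ), MeasurableSet O →
      M S z O ≤ ENNReal.ofReal (Real.exp (T.card * ε)) * M S' z O := by
  classical
  induction T using Finset.induction_on with
  | empty =>
    intro S S' h z O _
    have : S = S' := funext fun i => h i (by simp)
    simp [this]
  | @insert a T ha ih =>
    intro S S' hSS' z O hO
    set S'' := Function.update S a (S' a) with hS''
    have h1 : Neighbors S S'' := ⟨a, fun i hi => (Function.update_of_ne hi _ _).symm⟩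
    have h2 : ∀ i, i ∉ T → S'' i = S' i := by
      intro i hi
      by_cases hia : i = a
      · subst hia; simp [hS'']
      · rw [hS'', Function.update_of_ne hia]
        exact hSS' i (by simp [hia, hi])
    calc M S z O ≤ ENNReal.ofReal (Real.exp ε) * M S'' z O := hdp S S'' h1 z O hO
      _ ≤ ENNReal.ofReal (Real.exp ε) *
          (ENNReal.ofReal (Real.exp (T.card * ε)) * M S' z O) :=
          mul_le_mul_right (ih S'' S' h2 z O hO) _
      _ = ENNReal.ofReal (Real.exp ((insert a T).card * ε)) * M S' z O := by
          rw [← mul_assoc, ← ENNReal.ofReal_mul (Real.exp_pos _).le, ← Real.exp_add,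
            Finset.card_insert_of_notMem ha]
          norm_num
          ring_nf

lemma aux_swap {Z : Type*} [MeasurableSpace Z] {n : ℕ} (P : Measure Z)
    [IsProbabilityMeasure P] (T : Finset (Fin n)) :
    MeasurePreserving
      (fun p : (Fin n → Z) × (Fin n → Z) =>
        ((fun i => if i ∈ T then p.2 i else p.1 i, fun i => if i ∈ T then p.1 i else p.2 i)
          : (Fin n → Z) × (Fin n → Z)))
      ((Measure.pi fun _ : Fin n => P).prod (Measure.pi fun _ : Fin n => P))
      ((Measure.pi fun _ : Fin n => P).prod (Measure.pi fun _ : Fin n => P)) := by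
  classical
  set e : (Fin n ⊕ Fin n) ≃ (Fin n ⊕ Fin n) :=
    { toFun := Sum.elim (fun i => if i ∈ T then .inr i else .inl i)
        (fun i => if i ∈ T then .inl i else .inr i)
      invFun := Sum.elim (fun i => if i ∈ T then .inr i else .inl i)
        (fun i => if i ∈ T then .inl i else .inr i)
      left_inv := by rintro (i | i) <;> by_cases h : i ∈ T <;> simp [h]
      right_inv := by rintro (i | i) <;> by_cases h : i ∈ T <;> simp [h] } with he
  have h1 := measurePreserving_sumPiEquivProdPi (X := fun _ : Fin n ⊕ Fin n => Z)
    (fun _ => P)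
  have h1s := measurePreserving_sumPiEquivProdPi_symm (X := fun _ : Fin n ⊕ Fin n => Z)
    (fun _ => P)
  have h2 := measurePreserving_piCongrLeft (fun _ : Fin n ⊕ Fin n => P) e
  have hcomp := h1.comp (h2.comp h1s)
  have hfun : ((MeasurableEquiv.sumPiEquivProdPi (fun _ : Fin n ⊕ Fin n => Z)) ∘
      (MeasurableEquiv.piCongrLeft (fun _ : Fin n ⊕ Fin n => Z) e) ∘
      (MeasurableEquiv.sumPiEquivProdPi (fun _ : Fin n ⊕ Fin n => Z)).symm) =
      fun p : (Fin n → Z) × (Fin n → Z) =>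
        ((fun i => if i ∈ T then p.2 i else p.1 i, fun i => if i ∈ T then p.1 i else p.2 i)
          : (Fin n → Z) × (Fin n → Z)) := by
    have hs1 : ∀ g : (Fin n ⊕ Fin n) → Z,
        ((MeasurableEquiv.sumPiEquivProdPi (fun _ : Fin n ⊕ Fin n => Z)) g) =
          (fun i => g (.inl i), fun i => g (.inr i)) := fun g => rfl
    have hs2 : ∀ q : (Fin n → Z) × (Fin n → Z),
        ((MeasurableEquiv.sumPiEquivProdPi (fun _ : Fin n ⊕ Fin n => Z)).symm q) =
          Sum.elim q.1 q.2 := by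
      intro q; funext b; cases b <;> rfl
    have hes : ∀ b, e.symm b = e b := fun b => rfl
    funext p
    have hpc : ∀ (g : (Fin n ⊕ Fin n) → Z) (b : Fin n ⊕ Fin n),
        (MeasurableEquiv.piCongrLeft (fun _ : Fin n ⊕ Fin n => Z) e) g b = g (e.symm b) := by
      intro g b
      rw [MeasurableEquiv.coe_piCongrLeft]
      conv_lhs => rw [← e.apply_symm_apply b]
      rw [Equiv.piCongrLeft_apply_apply]
    refine Prod.ext ?_ ?_ <;> funext i
    · show (MeasurableEquiv.piCongrLeft (fun _ : Fin n ⊕ Fin n => Z) e)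
        ((MeasurableEquiv.sumPiEquivProdPi (fun _ : Fin n ⊕ Fin n => Z)).symm p) (.inl i) = _
      rw [hpc, hs2, hes]
      by_cases h : i ∈ T <;> simp [he, h]
    · show (MeasurableEquiv.piCongrLeft (fun _ : Fin n ⊕ Fin n => Z) e)
        ((MeasurableEquiv.sumPiEquivProdPi (fun _ : Fin n ⊕ Fin n => Z)).symm p) (.inr i) = _
      rw [hpc, hs2, hes]
      by_cases h : i ∈ T <;> simp [he, h]
  rw [hfun] at hcomp
  exact hcomp


lemma aux_integrable {α : Type*} [MeasurableSpace α] (ρ : Measure α) [IsProbabilityMeasure ρ]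
    {g : α → ℝ} {C : ℝ} (hg : Measurable g) (h0 : ∀ x, 0 ≤ g x) (hC : ∀ x, g x ≤ C) :
    Integrable g ρ := by
  refine Integrable.mono' (integrable_const C) hg.aestronglyMeasurable (ae_of_all _ fun x => ?_)
  rw [Real.norm_eq_abs, abs_of_nonneg (h0 x)]; exact hC x



theorem stmt_15 {Z : Type*} [MeasurableSpace Z] (n : ℕ) (hn : 0 < n) (B ε : ℝ)
    (hB : 0 ≤ B) (hε : 0 ≤ ε) (k : ℕ) (hk : 1 ≤ k)
    (M : (Fin n → Z) → Z → Measure ℝ)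
    (hprob : ∀ S z, IsProbabilityMeasure (M S z))
    (hrange : ∀ S z, M S z (Set.Icc (0 : ℝ) B)ᶜ = 0)
    (hmeas : Measurable fun p : (Fin n → Z) × Z => ∫ w, w ∂(M p.1 p.2))
    (hdp : ∀ S S' : Fin n → Z, Neighbors S S' → ∀ z, ∀ O : Set ℝ, MeasurableSet O →
      M S z O ≤ ENNReal.ofReal (Real.exp ε) * M S' z O)
    (P : Measure Z) [IsProbabilityMeasure P] :
    ∫ p, ((1 / n : ℝ) * ∑ i, ∫ w, w ∂(M p.1 (p.2 i))) ^ k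
        ∂((Measure.pi fun _ : Fin n => P).prod (Measure.pi fun _ : Fin n => P)) ≤
      Real.exp ((k : ℝ) ^ 2 * ε) *
        ∫ S, ((1 / n : ℝ) * ∑ i, ∫ w, w ∂(M S (S i))) ^ k
          ∂(Measure.pi fun _ : Fin n => P) := by
  classical
  set μ : Measure (Fin n → Z) := Measure.pi fun _ : Fin n => P with hμ
  set F : (Fin n → Z) → Z → ℝ := fun S z => ∫ w, w ∂(M S z) with hF
  have hf0 : ∀ S z, 0 ≤ F S z := fun S z => aux_nonneg (M S z) (hrange S z)
  have hfB : ∀ S z, F S z ≤ B := fun S z => by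
    haveI := hprob S z; exact aux_le_B (M S z) (hrange S z)
  -- group-privacy consequence on F
  have key : ∀ (T : Finset (Fin n)) (S S' : Fin n → Z), (∀ i, i ∉ T → S i = S' i) →
      T.card ≤ k → ∀ z, F S z ≤ Real.exp (k * ε) * F S' z := by
    intro T S S' hT hcard z
    haveI := hprob S z; haveI := hprob S' z
    have h1 : F S z ≤ Real.exp (T.card * ε) * F S' z :=
      aux_cmp (Real.exp_pos _).le (M S z) (M S' z) (hrange S z) (hrange S' z)
        (fun O hO => aux_grp M hdp T S S' hT z O hO)
    refine h1.trans (mul_le_mul_of_nonneg_right (Real.exp_le_exp.mpr ?_) (hf0 S' z))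
    exact mul_le_mul_of_nonneg_right (by exact_mod_cast hcard) hε
  have expand : ∀ a : Fin n → ℝ, (∑ i, a i) ^ k = ∑ I : Fin k → Fin n, ∏ j, a (I j) := by
    intro a
    rw [← Fin.prod_const k (∑ i, a i), Finset.prod_univ_sum, Fintype.piFinset_univ]
  -- per-tuple inequality
  have main_I : ∀ I : Fin k → Fin n,
      ∫ p, ∏ j, F p.1 (p.2 (I j)) ∂(μ.prod μ) ≤
        Real.exp ((k : ℝ) ^ 2 * ε) * ∫ S, ∏ j, F S (S (I j)) ∂μ := by
    intro I
    set T : Finset (Fin n) := Finset.image I Finset.univ with hT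
    have hTk : T.card ≤ k := le_trans Finset.card_image_le (by simp)
    have hσ := aux_swap P T
    set σ : ((Fin n → Z) × (Fin n → Z)) → ((Fin n → Z) × (Fin n → Z)) := fun p =>
      (fun i => if i ∈ T then p.2 i else p.1 i, fun i => if i ∈ T then p.1 i else p.2 i)
      with hσdef
    have hA : Measurable fun p : (Fin n → Z) × (Fin n → Z) =>
        (fun i => if i ∈ T then p.2 i else p.1 i : Fin n → Z) := by
      refine measurable_pi_lambda _ fun i => ?_
      by_cases h : i ∈ T
      · have hm : Measurable fun c : (Fin n → Z) × (Fin n → Z) => c.2 i :=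
          (measurable_pi_apply i).comp measurable_snd
        simpa [h] using hm
      · have hm : Measurable fun c : (Fin n → Z) × (Fin n → Z) => c.1 i :=
          (measurable_pi_apply i).comp measurable_fst
        simpa [h] using hm
    -- pointwise bound
    have hpt : ∀ p : (Fin n → Z) × (Fin n → Z),
        ∏ j, F p.1 (p.2 (I j)) ≤
          Real.exp ((k : ℝ) ^ 2 * ε) * ∏ j, F (σ p).1 (p.2 (I j)) := by
      intro p
      have hb : ∀ j : Fin k, F p.1 (p.2 (I j)) ≤ Real.exp (k * ε) * F (σ p).1 (p.2 (I j)) := by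
        intro j
        refine key T p.1 (σ p).1 (fun i hi => ?_) hTk _
        simp [hσdef, hi]
      calc ∏ j, F p.1 (p.2 (I j))
          ≤ ∏ j, (Real.exp (k * ε) * F (σ p).1 (p.2 (I j))) :=
            Finset.prod_le_prod (fun j _ => hf0 _ _) (fun j _ => hb j)
        _ = Real.exp (↑k * ε) ^ k * ∏ j, F (σ p).1 (p.2 (I j)) := by
            rw [Finset.prod_mul_distrib, Finset.prod_const, Finset.card_univ, Fintype.card_fin]
        _ = Real.exp ((k : ℝ) ^ 2 * ε) * ∏ j, F (σ p).1 (p.2 (I j)) := by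
            rw [← Real.exp_nat_mul]; ring_nf
    have hmeasL : Measurable fun p : (Fin n → Z) × (Fin n → Z) => ∏ j, F p.1 (p.2 (I j)) :=
      Finset.measurable_prod _ fun j _ =>
        hmeas.comp (measurable_fst.prodMk ((measurable_pi_apply (I j)).comp measurable_snd))
    have hmeasR : Measurable fun p : (Fin n → Z) × (Fin n → Z) => ∏ j, F (σ p).1 (p.2 (I j)) :=
      Finset.measurable_prod _ fun j _ =>
        hmeas.comp (hA.prodMk ((measurable_pi_apply (I j)).comp measurable_snd))
    have hprodBk : ∀ (g : Fin k → ℝ), (∀ j, 0 ≤ g j) → (∀ j, g j ≤ B) → ∏ j, g j ≤ B ^ k := by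
      intro g h0 h1
      calc ∏ j, g j ≤ ∏ _j : Fin k, B :=
            Finset.prod_le_prod (fun j _ => h0 j) (fun j _ => h1 j)
        _ = B ^ k := by rw [Finset.prod_const, Finset.card_univ, Fintype.card_fin]
    have hintL : Integrable (fun p : (Fin n → Z) × (Fin n → Z) => ∏ j, F p.1 (p.2 (I j)))
        (μ.prod μ) :=
      aux_integrable _ hmeasL (fun p => Finset.prod_nonneg fun j _ => hf0 _ _)
        (fun p => hprodBk _ (fun j => hf0 _ _) (fun j => hfB _ _))
    have hintR : Integrable (fun p : (Fin n → Z) × (Fin n → Z) =>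
        Real.exp ((k : ℝ) ^ 2 * ε) * ∏ j, F (σ p).1 (p.2 (I j))) (μ.prod μ) :=
      (aux_integrable _ hmeasR (fun p => Finset.prod_nonneg fun j _ => hf0 _ _)
        (fun p => hprodBk _ (fun j => hf0 _ _) (fun j => hfB _ _))).const_mul _
    have step1 : ∫ p, ∏ j, F p.1 (p.2 (I j)) ∂(μ.prod μ) ≤
        Real.exp ((k : ℝ) ^ 2 * ε) * ∫ p, ∏ j, F (σ p).1 (p.2 (I j)) ∂(μ.prod μ) :=
      (integral_mono hintL hintR hpt).trans_eq (integral_const_mul _ _)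
    -- swap
    have hcomp : (fun p : (Fin n → Z) × (Fin n → Z) => ∏ j, F (σ (σ p)).1 ((σ p).2 (I j))) =
        fun p => ∏ j, F p.1 (p.1 (I j)) := by
      funext p
      have h1 : (σ (σ p)).1 = p.1 := by
        funext i; by_cases h : i ∈ T <;> simp [hσdef, h]
      have h2 : ∀ j : Fin k, (σ p).2 (I j) = p.1 (I j) := by
        intro j
        have : I j ∈ T := by simp [hT]
        simp [hσdef, this]
      rw [h1]
      exact Finset.prod_congr rfl fun j _ => by rw [h2 j]
    have hσswap : ∫ p, ∏ j, F (σ p).1 (p.2 (I j)) ∂(μ.prod μ) =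
        ∫ p, ∏ j, F p.1 (p.1 (I j)) ∂(μ.prod μ) := by
      conv_lhs => rw [← hσ.map_eq]
      rw [integral_map hσ.measurable.aemeasurable hmeasR.aestronglyMeasurable]
      show ∫ p, ∏ j, F (σ (σ p)).1 ((σ p).2 (I j)) ∂(μ.prod μ) = _
      rw [hcomp]
    have hmg : Measurable fun S : Fin n → Z => ∏ j, F S (S (I j)) :=
      Finset.measurable_prod _ fun j _ =>
        hmeas.comp (measurable_id.prodMk (measurable_pi_apply (I j)))
    have hfst : ∫ p, (∏ j, F p.1 (p.1 (I j))) ∂(μ.prod μ) = ∫ S, ∏ j, F S (S (I j)) ∂μ := by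
      have hmap : (μ.prod μ).map Prod.fst = μ := by
        rw [Measure.map_fst_prod]; simp
      conv_rhs => rw [← hmap]
      rw [integral_map measurable_fst.aemeasurable hmg.aestronglyMeasurable]
    calc ∫ p, ∏ j, F p.1 (p.2 (I j)) ∂(μ.prod μ)
        ≤ Real.exp ((k : ℝ) ^ 2 * ε) * ∫ p, ∏ j, F (σ p).1 (p.2 (I j)) ∂(μ.prod μ) := step1
      _ = Real.exp ((k : ℝ) ^ 2 * ε) * ∫ S, ∏ j, F S (S (I j)) ∂μ := by
          rw [hσswap, hfst]
  -- assembly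
  have hintI : ∀ I : Fin k → Fin n,
      Integrable (fun p : (Fin n → Z) × (Fin n → Z) => ∏ j, F p.1 (p.2 (I j))) (μ.prod μ) := by
    intro I
    refine aux_integrable (C := B ^ k) _ (Finset.measurable_prod _ fun j _ =>
        hmeas.comp (measurable_fst.prodMk ((measurable_pi_apply (I j)).comp measurable_snd)))
      (fun p => Finset.prod_nonneg fun j _ => hf0 _ _) (fun p => ?_)
    calc ∏ j, F p.1 (p.2 (I j)) ≤ ∏ _j : Fin k, B :=
          Finset.prod_le_prod (fun j _ => hf0 _ _) (fun j _ => hfB _ _)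
      _ = B ^ k := by rw [Finset.prod_const, Finset.card_univ, Fintype.card_fin]
  have hintI' : ∀ I : Fin k → Fin n,
      Integrable (fun S : Fin n → Z => ∏ j, F S (S (I j))) μ := by
    intro I
    refine aux_integrable (C := B ^ k) _ (Finset.measurable_prod _ fun j _ =>
        hmeas.comp (measurable_id.prodMk (measurable_pi_apply (I j))))
      (fun S => Finset.prod_nonneg fun j _ => hf0 _ _) (fun S => ?_)
    calc ∏ j, F S (S (I j)) ≤ ∏ _j : Fin k, B :=
          Finset.prod_le_prod (fun j _ => hf0 _ _) (fun j _ => hfB _ _)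
      _ = B ^ k := by rw [Finset.prod_const, Finset.card_univ, Fintype.card_fin]
  have hLHS : ∫ p, ((1 / n : ℝ) * ∑ i, F p.1 (p.2 i)) ^ k ∂(μ.prod μ) =
      (1 / n : ℝ) ^ k * ∑ I : Fin k → Fin n, ∫ p, ∏ j, F p.1 (p.2 (I j)) ∂(μ.prod μ) := by
    simp_rw [mul_pow, expand]
    rw [integral_const_mul, integral_finset_sum _ (fun I _ => hintI I)]
  have hRHS : ∫ S, ((1 / n : ℝ) * ∑ i, F S (S i)) ^ k ∂μ =
      (1 / n : ℝ) ^ k * ∑ I : Fin k → Fin n, ∫ S, ∏ j, F S (S (I j)) ∂μ := by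
    simp_rw [mul_pow, expand]
    rw [integral_const_mul, integral_finset_sum _ (fun I _ => hintI' I)]
  show ∫ p, ((1 / n : ℝ) * ∑ i, F p.1 (p.2 i)) ^ k ∂(μ.prod μ) ≤
      Real.exp ((k : ℝ) ^ 2 * ε) * ∫ S, ((1 / n : ℝ) * ∑ i, F S (S i)) ^ k ∂μ
  rw [hLHS, hRHS]
  have hsum : ∑ I : Fin k → Fin n, ∫ p, ∏ j, F p.1 (p.2 (I j)) ∂(μ.prod μ) ≤
      ∑ I : Fin k → Fin n, Real.exp ((k : ℝ) ^ 2 * ε) * ∫ S, ∏ j, F S (S (I j)) ∂μ :=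
    Finset.sum_le_sum fun I _ => main_I I
  calc (1 / n : ℝ) ^ k * ∑ I : Fin k → Fin n, ∫ p, ∏ j, F p.1 (p.2 (I j)) ∂(μ.prod μ)
      ≤ (1 / n : ℝ) ^ k *
          ∑ I : Fin k → Fin n, Real.exp ((k : ℝ) ^ 2 * ε) * ∫ S, ∏ j, F S (S (I j)) ∂μ :=
        mul_le_mul_of_nonneg_left hsum (pow_nonneg (by positivity) k)
    _ = Real.exp ((k : ℝ) ^ 2 * ε) *
          ((1 / n : ℝ) ^ k * ∑ I : Fin k → Fin n, ∫ S, ∏ j, F S (S (I j)) ∂μ) := by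
        rw [← Finset.mul_sum]; ring
end
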